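/- Let α : [0,∞) → (0,1) be continuous, let λ > 0, let τ ≥ 0, t > 0, and let u ∈ [0,1). Then exp(−∫_τ^{τ+t} λ^{α(s)} (1−u)^{α(s)} ds) = exp(−∫_τ^{τ+t} λ^{α(s)} ds) + ∑_{n=1}^∞ u^n [ ∑_{r=1}^∞ ((−1)^{n+r}/r!) ∫_{[τ,τ+t]^r} λ^{β_r(s₁,…,s_r)} binom(β_r(s₁,…,s_r), n) ds₁⋯ds_r ], where the inner integrals are over the r-dimensional cube [τ,τ+t]^r with Lebesgue measure. -/

import Mathlib

open MeasureTheory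

/-- Generalized binomial coefficient `binom(x, n) = (∏_{j=0}^{n-1} (x - j)) / n!`. -/
noncomputable def gbinom (x : ℝ) (n : ℕ) : ℝ :=
  (∏ j ∈ Finset.range n, (x - (j : ℝ))) / (n.factorial : ℝ)

/-- `β_r(s₁, …, s_r) = ∑_{j=1}^r α(s_j)`. -/
noncomputable def betaSum (α : ℝ → ℝ) {r : ℕ} (s : Fin r → ℝ) : ℝ :=
  ∑ j, α (s j)

lemma gbinom_zero (x : ℝ) : gbinom x 0 = 1 := by simp [gbinom]

lemma gbinom_succ (x : ℝ) (n : ℕ) :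
    gbinom x (n + 1) = gbinom x n * (x - n) / (n + 1) := by
  rw [gbinom, gbinom, Finset.prod_range_succ, Nat.factorial_succ]
  push_cast
  rw [div_mul_eq_mul_div, div_div, mul_comm ((n:ℝ)+1)]

lemma gbinom_succ_mul (x : ℝ) (n : ℕ) :
    ((n : ℝ) + 1) * gbinom x (n + 1) = (x - n) * gbinom x n := by
  rw [gbinom_succ]
  field_simp

lemma abs_gbinom_le (x M : ℝ) (hM : |x| ≤ M) (n : ℕ) :
    |gbinom x n| ≤ (-1 : ℝ) ^ n * gbinom (-M) n := by
  have hM0 : 0 ≤ M := le_trans (abs_nonneg x) hM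
  induction n with
  | zero => simp [gbinom_zero]
  | succ n ih =>
      have h1 : |x - n| ≤ M + n := by
        have := abs_sub_abs_le_abs_sub x (n : ℝ)
        have h2 : |x - (n:ℝ)| ≤ |x| + |(n:ℝ)| := abs_sub x n
        have : |(n:ℝ)| = n := abs_of_nonneg (Nat.cast_nonneg n)
        calc |x - (n:ℝ)| ≤ |x| + |(n:ℝ)| := abs_sub x n
          _ = |x| + n := by rw [this]
          _ ≤ M + n := by linarith
      have key : (-1:ℝ)^(n+1) * gbinom (-M) (n+1) = ((-1:ℝ)^n * gbinom (-M) n) * ((M + n) / (n+1)) := by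
        rw [gbinom_succ]
        ring
      rw [key]
      have hpos : (0:ℝ) < (n:ℝ) + 1 := by positivity
      calc |gbinom x (n+1)| = |gbinom x n| * |x - n| / ((n:ℝ)+1) := by
            rw [gbinom_succ, abs_div, abs_mul, abs_of_pos hpos]
        _ ≤ ((-1:ℝ)^n * gbinom (-M) n) * (M + n) / ((n:ℝ)+1) := by
            have hb : (0:ℝ) ≤ (-1:ℝ)^n * gbinom (-M) n := le_trans (abs_nonneg _) ih
            have hb : (0:ℝ) ≤ (-1:ℝ)^n * gbinom (-M) n := le_trans (abs_nonneg _) ih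
            gcongr
        _ = ((-1:ℝ)^n * gbinom (-M) n) * ((M + n) / ((n:ℝ)+1)) := by ring

/-- generic ratio-test summability helper -/
lemma aux_summable (C x : ℝ) (hC : 0 ≤ C) (hx : |x| < 1) (f : ℕ → ℝ)
    (hf : ∀ n : ℕ, |f (n + 1)| ≤ (C + n) / (n + 1) * |x| * |f n|) : Summable f := by
  rcases eq_or_ne x 0 with rfl | hx0
  · apply summable_of_ne_finset_zero (s := {0})
    intro n hn
    rcases Nat.exists_eq_succ_of_ne_zero (by simpa using hn) with ⟨m, rfl⟩
    have := hf m
    simp only [abs_zero, mul_zero, zero_mul] at this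
    exact abs_nonpos_iff.mp (by linarith [this])
  · set ρ : ℝ := (1 + |x|) / 2 with hρdef
    have hxpos : 0 < |x| := abs_pos.mpr hx0
    have hρ1 : ρ < 1 := by rw [hρdef]; linarith
    have hρx : |x| < ρ := by rw [hρdef]; linarith
    obtain ⟨N, hN⟩ := exists_nat_ge ((C * |x| - ρ) / (ρ - |x|))
    apply summable_of_ratio_norm_eventually_le hρ1
    filter_upwards [Filter.eventually_ge_atTop N] with n hn
    have hn' : ((C * |x| - ρ) / (ρ - |x|)) ≤ n := le_trans hN (by exact_mod_cast hn)
    have hd : 0 < ρ - |x| := by linarith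
    have h1 : C * |x| - ρ ≤ n * (ρ - |x|) := by
      rw [div_le_iff₀ hd] at hn'; linarith
    have h2 : (C + n) * |x| ≤ ρ * (n + 1) := by nlinarith
    have h3 : (C + n) / (n + 1) * |x| ≤ ρ := by
      rw [div_mul_eq_mul_div, div_le_iff₀ (by positivity : (0:ℝ) < (n:ℝ)+1)]
      linarith
    calc ‖f (n+1)‖ ≤ (C + n) / (n + 1) * |x| * |f n| := hf n
      _ ≤ ρ * ‖f n‖ := by
          apply mul_le_mul_of_nonneg_right h3 (abs_nonneg _)

lemma summable_gbinom_abs (a x : ℝ) (hx : |x| < 1) :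
    Summable (fun n => |gbinom a n * x ^ n|) := by
  apply aux_summable (|a| + 1) x (by positivity) hx
  intro n
  have hfn1 : gbinom a (n+1) * x^(n+1) = (gbinom a n * x^n) * ((a - n)/(n+1) * x) := by
    rw [gbinom_succ]; ring
  simp only [abs_abs]
  rw [hfn1, abs_mul]
  rw [mul_comm ((|a| + 1 + (n:ℝ)) / (n + 1) * |x|) _]
  apply mul_le_mul_of_nonneg_left ?_ (abs_nonneg _)
  rw [abs_mul, abs_div]
  have h1 : |a - (n:ℝ)| ≤ |a| + 1 + n := by
    calc |a - (n:ℝ)| ≤ |a| + |(n:ℝ)| := abs_sub a n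
      _ = |a| + n := by simp only [Nat.abs_cast]
      _ ≤ |a| + 1 + n := by linarith
  have h2 : |(n:ℝ) + 1| = (n:ℝ) + 1 := abs_of_pos (by positivity)
  rw [h2]
  apply mul_le_mul_of_nonneg_right ?_ (abs_nonneg x)
  apply div_le_div_of_nonneg_right h1 (by positivity) |>.trans_eq rfl

lemma summable_gbinom (a x : ℝ) (hx : |x| < 1) :
    Summable (fun n => gbinom a n * x ^ n) :=
  (summable_gbinom_abs a x hx).of_abs

lemma summable_gbinom_deriv_abs (a x : ℝ) (hx : |x| < 1) :
    Summable (fun n : ℕ => |((n:ℝ) + 1) * gbinom a (n+1) * x ^ n|) := by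
  apply aux_summable (|a| + 1) x (by positivity) hx
  intro n
  have hfn1 : ((n:ℝ)+1+1) * gbinom a (n+1+1) * x^(n+1)
      = (((n:ℝ)+1) * gbinom a (n+1) * x^n) * ((a - (n+1))/(n+1) * x) := by
    have h := gbinom_succ a (n+1)
    push_cast at h ⊢
    rw [h]
    field_simp
    ring
  simp only [abs_abs]
  push_cast
  rw [hfn1, abs_mul, mul_comm ((|a| + 1 + (n:ℝ)) / (n + 1) * |x|) _]
  apply mul_le_mul_of_nonneg_left ?_ (abs_nonneg _)
  rw [abs_mul, abs_div]
  have h1 : |a - ((n:ℝ)+1)| ≤ |a| + 1 + n := by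
    calc |a - ((n:ℝ)+1)| ≤ |a| + |(n:ℝ)+1| := abs_sub a _
      _ = |a| + (n+1) := by rw [abs_of_pos (by positivity : (0:ℝ) < (n:ℝ)+1)]
      _ ≤ |a| + 1 + n := by linarith
  have h2 : |(n:ℝ) + 1| = (n:ℝ) + 1 := abs_of_pos (by positivity)
  rw [h2]
  apply mul_le_mul_of_nonneg_right ?_ (abs_nonneg x)
  exact div_le_div_of_nonneg_right h1 (by positivity)

lemma summable_gbinom_deriv (a x : ℝ) (hx : |x| < 1) :
    Summable (fun n : ℕ => ((n:ℝ) + 1) * gbinom a (n+1) * x ^ n) :=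
  (summable_gbinom_deriv_abs a x hx).of_abs

theorem hasSum_gbinom (a x : ℝ) (hx : |x| < 1) :
    HasSum (fun n => gbinom a n * x ^ n) ((1 + x) ^ a) := by
  set ρ : ℝ := (1 + |x|) / 2 with hρdef
  have hρ0 : 0 < ρ := by positivity
  have hρ1 : ρ < 1 := by rw [hρdef]; linarith
  have hxρ : |x| < ρ := by rw [hρdef]; linarith
  have hρρ : |ρ| < 1 := by rwa [abs_of_pos hρ0]
  set B : Set ℝ := Metric.ball (0:ℝ) ρ with hBdef
  have hmem : ∀ y : ℝ, y ∈ B ↔ |y| < ρ := by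
    intro y; simp [hBdef, Metric.mem_ball, Real.dist_eq]
  have hxB : x ∈ B := (hmem x).mpr hxρ
  have h0B : (0:ℝ) ∈ B := (hmem 0).mpr (by simpa using hρ0)
  -- the bound series
  set uu : ℕ → ℝ := fun n => (n:ℝ) * |gbinom a n| * ρ ^ n / ρ with huu
  have huu_summable : Summable uu := by
    have h1 : Summable (fun n : ℕ => |((n:ℝ) + 1) * gbinom a (n+1) * ρ ^ n|) :=
      summable_gbinom_deriv_abs a ρ hρρ
    have h2 : Summable (fun n => uu (n+1)) := by
      apply h1.congr
      intro n
      rw [huu]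
      push_cast
      rw [abs_mul, abs_mul, abs_of_nonneg (by positivity : (0:ℝ) ≤ (n:ℝ)+1),
        abs_of_nonneg (pow_nonneg hρ0.le n), pow_succ]
      field_simp
    exact (summable_nat_add_iff 1).mp h2
  -- term derivatives
  have hterm : ∀ (n : ℕ) (y : ℝ), HasDerivAt (fun z => gbinom a n * z ^ n)
      (gbinom a n * ((n:ℝ) * y ^ (n-1))) y := fun n y => (hasDerivAt_pow n y).const_mul _
  have hbound : ∀ (n : ℕ) (y : ℝ), y ∈ B → ‖gbinom a n * ((n:ℝ) * y ^ (n-1))‖ ≤ uu n := by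
    intro n y hy
    rcases Nat.eq_zero_or_pos n with rfl | hn
    · simp [huu]
    · have hyρ : |y| ≤ ρ := ((hmem y).mp hy).le
      rw [Real.norm_eq_abs]
      have habs : |gbinom a n * ((n:ℝ) * y ^ (n-1))| = |gbinom a n| * ((n:ℝ) * |y| ^ (n-1)) := by
        rw [abs_mul, abs_mul, abs_pow, abs_of_nonneg (show (0:ℝ) ≤ (n:ℝ) from Nat.cast_nonneg n)]
      rw [habs, huu]
      have h1 : |y| ^ (n-1) ≤ ρ ^ (n-1) := pow_le_pow_left₀ (abs_nonneg y) hyρ _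
      have h2 : ρ ^ (n-1) = ρ ^ n / ρ := by
        rw [eq_div_iff hρ0.ne', ← pow_succ]
        congr 1
        omega
      calc |gbinom a n| * ((n:ℝ) * |y| ^ (n-1)) ≤ |gbinom a n| * ((n:ℝ) * ρ ^ (n-1)) := by
            apply mul_le_mul_of_nonneg_left ?_ (abs_nonneg _)
            exact mul_le_mul_of_nonneg_left h1 (Nat.cast_nonneg n)
        _ = (n:ℝ) * |gbinom a n| * ρ ^ n / ρ := by rw [h2]; ring
  have hg0 : Summable (fun n => gbinom a n * (0:ℝ) ^ n) := by
    apply summable_of_ne_finset_zero (s := {0})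
    intro n hn
    simp [zero_pow (by simpa using hn : n ≠ 0)]
  -- the sum function and its derivative
  set g : ℝ → ℝ := fun z => ∑' n, gbinom a n * z ^ n with hgdef
  have hderiv : ∀ y ∈ B, HasDerivAt g (∑' n, gbinom a n * ((n:ℝ) * y ^ (n-1))) y := by
    intro y hy
    exact hasDerivAt_tsum_of_isPreconnected huu_summable Metric.isOpen_ball
      (convex_ball _ _).isPreconnected (fun n z _ => hterm n z) hbound h0B hg0 hy
  -- identity (1+y) * D y = a * g y
  have key : ∀ y ∈ B, (1 + y) * (∑' n, gbinom a n * ((n:ℝ) * y ^ (n-1))) = a * g y := by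
    intro y hy
    have hy1 : |y| < 1 := lt_trans ((hmem y).mp hy) hρ1
    have he : Summable (fun n : ℕ => ((n:ℝ) + 1) * gbinom a (n+1) * y ^ n) :=
      summable_gbinom_deriv a y hy1
    have hshift : ∀ n : ℕ, gbinom a (n+1) * (((n:ℝ)+1) * y ^ ((n+1)-1))
        = ((n:ℝ) + 1) * gbinom a (n+1) * y ^ n := by
      intro n; simp; ring
    have hh : Summable (fun n => gbinom a n * ((n:ℝ) * y ^ (n-1))) := by
      apply (summable_nat_add_iff 1).mp
      apply he.congr
      intro n
      rw [← hshift n]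
      push_cast
      norm_num
    have hD : (∑' n, gbinom a n * ((n:ℝ) * y ^ (n-1)))
        = ∑' n : ℕ, ((n:ℝ) + 1) * gbinom a (n+1) * y ^ n := by
      rw [Summable.tsum_eq_zero_add hh]
      simp only [Nat.cast_zero, zero_mul, mul_zero, zero_add]
      apply tsum_congr
      intro n
      rw [← hshift n]
      push_cast
      norm_num
    have hh2shift : Summable (fun n : ℕ => ((n:ℝ)+1) * gbinom a (n+1) * y ^ (n+1)) := by
      apply (he.mul_left y).congr
      intro n; push_cast; ring
    have hh2 : Summable (fun n : ℕ => (n:ℝ) * gbinom a n * y ^ n) := by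
      apply (summable_nat_add_iff 1).mp
      apply hh2shift.congr
      intro n; push_cast; ring
    have hyD : y * (∑' n : ℕ, ((n:ℝ) + 1) * gbinom a (n+1) * y ^ n)
        = ∑' n : ℕ, (n:ℝ) * gbinom a n * y ^ n := by
      rw [← tsum_mul_left, Summable.tsum_eq_zero_add hh2]
      simp only [Nat.cast_zero, zero_mul, zero_add]
      apply tsum_congr
      intro n; push_cast; ring
    rw [hD, add_mul, one_mul, hyD, ← Summable.tsum_add he hh2]
    rw [hgdef, ← tsum_mul_left]
    apply tsum_congr
    intro n
    have := gbinom_succ_mul a n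
    calc ((n:ℝ) + 1) * gbinom a (n+1) * y ^ n + (n:ℝ) * gbinom a n * y ^ n
        = (a - n) * gbinom a n * y ^ n + (n:ℝ) * gbinom a n * y ^ n := by rw [this]
      _ = a * (gbinom a n * y ^ n) := by ring
  -- the quotient function is constant
  have hpos : ∀ y ∈ B, (0:ℝ) < 1 + y := by
    intro y hy
    have := (hmem y).mp hy
    have := abs_lt.mp (lt_trans this hρ1)
    linarith [this.1]
  set q : ℝ → ℝ := fun z => g z * (1 + z) ^ (-a) with hqdef
  have hqderiv : ∀ y ∈ B, HasDerivAt q 0 y := by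
    intro y hy
    have h1y : (0:ℝ) < 1 + y := hpos y hy
    have hr : HasDerivAt (fun z : ℝ => (1 + z) ^ (-a)) (-a * (1 + y) ^ (-a - 1)) y := by
      have h1 : HasDerivAt (fun z : ℝ => 1 + z) 1 y := (hasDerivAt_id y).const_add 1
      have h2 : HasDerivAt (fun w : ℝ => w ^ (-a)) (-a * (1 + y) ^ (-a - 1)) (1 + y) :=
        Real.hasDerivAt_rpow_const (Or.inl h1y.ne')
      have h3 := h2.comp y h1
      rw [mul_one] at h3
      exact h3
    have hmul := (hderiv y hy).mul hr
    have hval : (∑' n : ℕ, gbinom a n * ((n:ℝ) * y ^ (n-1))) * (1 + y) ^ (-a)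
        + g y * (-a * (1 + y) ^ (-a - 1)) = 0 := by
      have hsplit : (1 + y) ^ (-a) = (1 + y) ^ (-a - 1) * (1 + y) := by
        nth_rewrite 3 [← Real.rpow_one (1+y)]
        rw [← Real.rpow_add h1y]
        norm_num
      rw [hsplit]
      have hk := key y hy
      linear_combination (1 + y) ^ (-a - 1) * hk
    rw [← hval]
    exact hmul
  have hconst : q x = q 0 := by
    have := Convex.norm_image_sub_le_of_norm_hasDerivWithin_le (C := 0)
      (fun y hy => (hqderiv y hy).hasDerivWithinAt) (fun y _ => by norm_num)
      (convex_ball (0:ℝ) ρ) h0B hxB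
    have h0 : ‖q x - q 0‖ ≤ 0 := by simpa using this
    have := norm_nonneg (q x - q 0)
    have : ‖q x - q 0‖ = 0 := le_antisymm h0 this
    rw [norm_eq_zero, sub_eq_zero] at this
    exact this
  have hg0val : g 0 = 1 := by
    have h : g 0 = ∑' n : ℕ, gbinom a n * (0:ℝ) ^ n := rfl
    rw [h, tsum_eq_single 0 (fun n hn => by simp [zero_pow hn]), pow_zero, gbinom_zero, mul_one]
  have hq0 : q 0 = 1 := by
    show g 0 * ((1 + 0:ℝ)) ^ (-a) = 1
    rw [hg0val]
    norm_num
  have h1x : (0:ℝ) < 1 + x := hpos x hxB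
  have hgx : g x = (1 + x) ^ a := by
    have h : g x * (1 + x) ^ (-a) = 1 := hconst.trans hq0
    rw [Real.rpow_neg h1x.le] at h
    have hne : (1 + x) ^ a ≠ 0 := (Real.rpow_pos_of_pos h1x a).ne'
    field_simp at h
    exact h
  exact (Summable.hasSum_iff (summable_gbinom a x hx)).mpr hgx

lemma rpow_sum_eq (c : ℝ) (hc : 0 < c) {ι : Type*} (s : Finset ι) (f : ι → ℝ) :
    c ^ (∑ i ∈ s, f i) = ∏ i ∈ s, c ^ f i := by
  simp only [Real.rpow_def_of_pos hc, ← Real.exp_sum, Finset.mul_sum]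

lemma restrict_pi_eq (r : ℕ) (S : Set ℝ) (hS : MeasurableSet S) :
    (volume : Measure (Fin r → ℝ)).restrict (Set.univ.pi fun _ => S)
      = Measure.pi (fun _ : Fin r => (volume : Measure ℝ).restrict S) := by
  refine (Measure.pi_eq (μ := fun _ : Fin r => (volume : Measure ℝ).restrict S) fun s hs => ?_).symm
  rw [Measure.restrict_apply (MeasurableSet.univ_pi hs)]
  have h : (Set.univ.pi s) ∩ (Set.univ.pi fun _ => S) = Set.univ.pi (fun i => s i ∩ S) := by
    rw [← Set.pi_inter_distrib]
  rw [h, volume_pi_pi]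
  exact Finset.prod_congr rfl fun i _ => (Measure.restrict_apply (hs i)).symm

lemma integral_pi_pow (μ : Measure ℝ) [SigmaFinite μ] (f : ℝ → ℝ) (r : ℕ) :
    ∫ s : Fin r → ℝ, ∏ i, f (s i) ∂(Measure.pi fun _ => μ) = (∫ x, f x ∂μ) ^ r := by
  letI M : MeasureSpace ℝ := ⟨μ⟩
  haveI : SigmaFinite (volume : Measure ℝ) := ‹SigmaFinite μ›
  have := MeasureTheory.integral_fintype_prod_eq_pow (𝕜 := ℝ) (ι := Fin r) f (μ := μ)
  simpa [Fintype.card_fin] using this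

lemma continuous_gbinom (n : ℕ) : Continuous (fun y : ℝ => gbinom y n) := by
  unfold gbinom
  apply Continuous.div_const
  exact continuous_finset_prod _ fun j _ => by continuity

lemma hasSum_cube {r : ℕ} (Q : Set (Fin r → ℝ)) (hQm : MeasurableSet Q) (hQc : IsCompact Q)
    (w b : (Fin r → ℝ) → ℝ) (hw : ContinuousOn w Q) (hwpos : ∀ x ∈ Q, 0 ≤ w x)
    (hb : ContinuousOn b Q) (M : ℝ) (hM : ∀ x ∈ Q, |b x| ≤ M)
    (c : ℝ) (hc : |c| < 1) :
    HasSum (fun n : ℕ => ∫ x in Q, w x * gbinom (b x) n * c ^ n)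
      (∫ x in Q, w x * (1 + c) ^ (b x)) := by
  have hc' : |(-|c|)| < 1 := by rwa [abs_neg, abs_abs]
  set K : ℝ := ∑' n : ℕ, gbinom (-M) n * (-|c|) ^ n with hK
  have hsumM : Summable (fun n : ℕ => gbinom (-M) n * (-|c|) ^ n) := summable_gbinom (-M) _ hc'
  apply hasSum_integral_of_dominated_convergence
    (bound := fun n x => w x * (gbinom (-M) n * (-|c|) ^ n))
  · intro n
    apply ContinuousOn.aestronglyMeasurable ?_ hQm
    exact ((hw.mul ((continuous_gbinom n).comp_continuousOn hb)).mul continuousOn_const)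
  · intro n
    rw [ae_restrict_iff' hQm]
    apply ae_of_all
    intro x hx
    have h1 : |gbinom (b x) n| ≤ (-1:ℝ)^n * gbinom (-M) n := abs_gbinom_le (b x) M (hM x hx) n
    have h2 : (0:ℝ) ≤ (-1:ℝ)^n * gbinom (-M) n := le_trans (abs_nonneg _) h1
    have h3 : gbinom (-M) n * (-|c|) ^ n = ((-1:ℝ)^n * gbinom (-M) n) * |c| ^ n := by
      rw [neg_pow]; ring
    rw [Real.norm_eq_abs, abs_mul, abs_mul, abs_pow, abs_of_nonneg (hwpos x hx), h3]
    rw [← mul_assoc]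
    apply mul_le_mul_of_nonneg_right ?_ (pow_nonneg (abs_nonneg c) n)
    exact mul_le_mul_of_nonneg_left h1 (hwpos x hx)
  · rw [ae_restrict_iff' hQm]
    apply ae_of_all
    intro x hx
    exact hsumM.mul_left (w x)
  · have heq : (fun x => ∑' n : ℕ, w x * (gbinom (-M) n * (-|c|) ^ n)) = fun x => w x * K :=
      funext fun x => tsum_mul_left
    rw [heq]
    exact (hw.integrableOn_compact hQc).mul_const K
  · rw [ae_restrict_iff' hQm]
    apply ae_of_all
    intro x hx
    have h := (hasSum_gbinom (b x) c hc).mul_left (w x)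
    simpa only [← mul_assoc] using h

lemma gbinom_zero_left (n : ℕ) : gbinom 0 (n + 1) = 0 := by
  unfold gbinom
  rw [Finset.prod_eq_zero (Finset.mem_range.mpr n.succ_pos) (by norm_num)]
  simp

lemma beta_cont (α : ℝ → ℝ) (τ t : ℝ) (hαc : ContinuousOn α (Set.Ici 0)) (hτ : 0 ≤ τ) (r : ℕ) :
    ContinuousOn (fun s : Fin r → ℝ => betaSum α s)
      (Set.univ.pi fun _ => Set.Icc τ (τ + t)) := by
  unfold betaSum
  apply continuousOn_finset_sum
  intro j _
  apply ContinuousOn.comp hαc (continuous_apply j).continuousOn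
  intro s hs
  have := hs j (Set.mem_univ j)
  exact le_trans hτ this.1

lemma rpow_base_cont {lam : ℝ} (hlam : 0 < lam) {X : Type*} [TopologicalSpace X] {b : X → ℝ}
    {Q : Set X} (hb : ContinuousOn b Q) : ContinuousOn (fun x => lam ^ b x) Q := by
  have h : (fun x => lam ^ b x) = fun x => Real.exp (Real.log lam * b x) := by
    funext x
    rw [Real.rpow_def_of_pos hlam]
  rw [h]
  exact Real.continuous_exp.comp_continuousOn (continuousOn_const.mul hb)

theorem stmt_3 (α : ℝ → ℝ) (hα : ∀ s ∈ Set.Ici (0 : ℝ), α s ∈ Set.Ioo (0 : ℝ) 1)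
    (hαc : ContinuousOn α (Set.Ici 0)) (lam : ℝ) (hlam : 0 < lam)
    (τ t : ℝ) (hτ : 0 ≤ τ) (ht : 0 < t) (u : ℝ) (hu : u ∈ Set.Ico (0 : ℝ) 1) :
    Real.exp (-(∫ s in τ..(τ + t), lam ^ α s * (1 - u) ^ α s))
      = Real.exp (-(∫ s in τ..(τ + t), lam ^ α s))
        + ∑' n : ℕ, u ^ (n + 1) *
            ∑' r : ℕ, ((-1 : ℝ) ^ ((n + 1) + (r + 1)) / ((r + 1).factorial : ℝ)) *
              ∫ s : Fin (r + 1) → ℝ in Set.univ.pi (fun _ => Set.Icc τ (τ + t)),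
                lam ^ betaSum α s * gbinom (betaSum α s) (n + 1) := by
  obtain ⟨hu0, hu1⟩ := hu
  have hle : τ ≤ τ + t := by linarith
  set T : Set ℝ := Set.Icc τ (τ + t) with hTdef
  have hTm : MeasurableSet T := measurableSet_Icc
  have hTsub : T ⊆ Set.Ici (0:ℝ) := fun x hx => le_trans hτ hx.1
  have h1u : 0 < 1 - u := by linarith
  -- convert interval integrals
  have hiv : ∀ f : ℝ → ℝ, (∫ s in τ..(τ + t), f s) = ∫ s in T, f s := fun f => by
    rw [intervalIntegral.integral_of_le hle, hTdef, integral_Icc_eq_integral_Ioc]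
  -- cube notation
  have hQm : ∀ r : ℕ, MeasurableSet (Set.univ.pi fun _ : Fin r => T) :=
    fun r => MeasurableSet.univ_pi fun _ => hTm
  have hQc : ∀ r : ℕ, IsCompact (Set.univ.pi fun _ : Fin r => T) :=
    fun r => isCompact_univ_pi fun _ => isCompact_Icc
  have hβ0 : ∀ r : ℕ, ∀ s ∈ (Set.univ.pi fun _ : Fin r => T), 0 ≤ betaSum α s := by
    intro r s hs
    apply Finset.sum_nonneg
    intro j _
    exact (hα (s j) (hTsub (hs j (Set.mem_univ j)))).1.le
  have hβr : ∀ r : ℕ, ∀ s ∈ (Set.univ.pi fun _ : Fin r => T), |betaSum α s| ≤ (r:ℝ) := by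
    intro r s hs
    rw [abs_of_nonneg (hβ0 r s hs)]
    calc betaSum α s ≤ ∑ _j : Fin r, (1:ℝ) := by
          apply Finset.sum_le_sum
          intro j _
          exact (hα (s j) (hTsub (hs j (Set.mem_univ j)))).2.le
      _ = (r:ℝ) := by simp
  have hβc : ∀ r : ℕ, ContinuousOn (fun s : Fin r → ℝ => betaSum α s)
      (Set.univ.pi fun _ => T) := fun r => beta_cont α τ t hαc hτ r
  have hwc : ∀ r : ℕ, ContinuousOn (fun s : Fin r → ℝ => lam ^ betaSum α s)
      (Set.univ.pi fun _ => T) := fun r => rpow_base_cont hlam (hβc r)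
  have hwpos : ∀ r : ℕ, ∀ s : Fin r → ℝ, 0 < lam ^ betaSum α s :=
    fun r s => Real.rpow_pos_of_pos hlam _
  -- the basic integral
  set Jc : ℝ → ℝ := fun c => ∫ s in T, lam ^ α s * c ^ α s with hJcdef
  -- power formula
  have hpow : ∀ c : ℝ, 0 < c → ∀ r : ℕ,
      (Jc c) ^ r = ∫ s : Fin r → ℝ in Set.univ.pi fun _ => T,
        lam ^ betaSum α s * c ^ betaSum α s := by
    intro c hc r
    have h1 : (fun s : Fin r → ℝ => lam ^ betaSum α s * c ^ betaSum α s)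
        = fun s => ∏ i, (lam ^ α (s i) * c ^ α (s i)) := by
      funext s
      rw [Finset.prod_mul_distrib]
      unfold betaSum
      rw [rpow_sum_eq lam hlam, rpow_sum_eq c hc]
    rw [h1, restrict_pi_eq r T hTm,
      integral_pi_pow ((volume : Measure ℝ).restrict T) (fun x => lam ^ α x * c ^ α x) r]
  -- the two double-indexed families
  set F : ℕ → ℕ → ℝ := fun r n => ((-1:ℝ)^r / (r.factorial : ℝ)) *
    ∫ s : Fin r → ℝ in Set.univ.pi fun _ => T,
      lam ^ betaSum α s * gbinom (betaSum α s) n * (-u)^n with hFdef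
  set G : ℕ → ℕ → ℝ := fun r n => (1 / (r.factorial : ℝ)) *
    ∫ s : Fin r → ℝ in Set.univ.pi fun _ => T,
      lam ^ betaSum α s * gbinom (-(betaSum α s)) n * (-u)^n with hGdef
  have huabs : |(-u)| < 1 := by rw [abs_neg, abs_of_nonneg hu0]; exact hu1
  have hFhs : ∀ r : ℕ, HasSum (F r) ((-Jc (1-u))^r / r.factorial) := by
    intro r
    have h := hasSum_cube (Set.univ.pi fun _ : Fin r => T) (hQm r) (hQc r)
      (fun s => lam ^ betaSum α s) (fun s => betaSum α s) (hwc r)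
      (fun s _ => (hwpos r s).le) (hβc r) r (hβr r) (-u) huabs
    have hval : (∫ s : Fin r → ℝ in Set.univ.pi fun _ => T,
        lam ^ betaSum α s * (1 + -u) ^ betaSum α s) = (Jc (1-u))^r := by
      have he : (1:ℝ) + -u = 1 - u := by ring
      rw [hpow (1-u) h1u r, he]
    rw [hval] at h
    have h2 := h.mul_left ((-1:ℝ)^r / r.factorial)
    have h3 : ((-1:ℝ)^r / r.factorial) * (Jc (1-u))^r = (-Jc (1-u))^r / r.factorial := by
      rw [neg_pow]; ring
    rw [h3] at h2
    exact h2
  have hGhs : ∀ r : ℕ, HasSum (G r) ((Jc ((1-u)⁻¹))^r / r.factorial) := by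
    intro r
    have h := hasSum_cube (Set.univ.pi fun _ : Fin r => T) (hQm r) (hQc r)
      (fun s => lam ^ betaSum α s) (fun s => -(betaSum α s)) (hwc r)
      (fun s _ => (hwpos r s).le) (hβc r).neg r
      (fun s hs => by rw [abs_neg]; exact hβr r s hs) (-u) huabs
    have hval : (∫ s : Fin r → ℝ in Set.univ.pi fun _ => T,
        lam ^ betaSum α s * (1 + -u) ^ (-(betaSum α s))) = (Jc ((1-u)⁻¹))^r := by
      rw [hpow ((1-u)⁻¹) (by positivity) r]
      apply integral_congr_ae
      apply ae_of_all
      intro s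
      show lam ^ betaSum α s * (1 + -u) ^ (-(betaSum α s))
          = lam ^ betaSum α s * (1 - u)⁻¹ ^ betaSum α s
      symm
      congr 1
      rw [Real.inv_rpow h1u.le, ← Real.rpow_neg h1u.le]
      have he2 : (1:ℝ) - u = 1 + -u := by ring
      rw [he2]
    rw [hval] at h
    have h2 := h.mul_left (1 / (r.factorial:ℝ))
    have h3 : (1/(r.factorial:ℝ)) * (Jc ((1-u)⁻¹))^r = (Jc ((1-u)⁻¹))^r / (r.factorial:ℝ) := by
      ring
    rw [h3] at h2
    exact h2
  have hGnn : ∀ r n : ℕ, 0 ≤ G r n := by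
    intro r n
    apply mul_nonneg (by positivity)
    apply setIntegral_nonneg (hQm r)
    intro s hs
    have hb0 := hβ0 r s hs
    have h1 : |gbinom (betaSum α s) n| ≤ (-1:ℝ)^n * gbinom (-(betaSum α s)) n :=
      abs_gbinom_le _ _ (le_of_eq (abs_of_nonneg hb0)) n
    have h2 : (0:ℝ) ≤ (-1:ℝ)^n * gbinom (-(betaSum α s)) n := le_trans (abs_nonneg _) h1
    have h3 : lam ^ betaSum α s * gbinom (-(betaSum α s)) n * (-u)^n
        = lam ^ betaSum α s * (((-1:ℝ)^n * gbinom (-(betaSum α s)) n) * u^n) := by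
      rw [neg_pow]; ring
    rw [h3]
    exact mul_nonneg (hwpos r s).le (mul_nonneg h2 (pow_nonneg hu0 n))
  have hIntF : ∀ r n : ℕ, IntegrableOn
      (fun s : Fin r → ℝ => lam ^ betaSum α s * gbinom (betaSum α s) n * (-u)^n)
      (Set.univ.pi fun _ => T) := by
    intro r n
    apply ContinuousOn.integrableOn_compact (hQc r)
    exact ((hwc r).mul ((continuous_gbinom n).comp_continuousOn (hβc r))).mul continuousOn_const
  have hIntG : ∀ r n : ℕ, IntegrableOn
      (fun s : Fin r → ℝ => lam ^ betaSum α s * gbinom (-(betaSum α s)) n * (-u)^n)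
      (Set.univ.pi fun _ => T) := by
    intro r n
    apply ContinuousOn.integrableOn_compact (hQc r)
    exact ((hwc r).mul ((continuous_gbinom n).comp_continuousOn (hβc r).neg)).mul
      continuousOn_const
  have hFG : ∀ r n : ℕ, |F r n| ≤ G r n := by
    intro r n
    have h1 : |((-1:ℝ)^r / (r.factorial:ℝ))| = 1 / r.factorial := by
      rw [abs_div, abs_pow, abs_neg, abs_one, one_pow, abs_of_nonneg (by positivity)]
    show |((-1:ℝ)^r / (r.factorial:ℝ)) * _| ≤ (1 / (r.factorial:ℝ)) * _
    rw [abs_mul, h1]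
    apply mul_le_mul_of_nonneg_left ?_ (by positivity)
    calc |∫ s : Fin r → ℝ in Set.univ.pi fun _ => T,
          lam ^ betaSum α s * gbinom (betaSum α s) n * (-u)^n|
        ≤ ∫ s : Fin r → ℝ in Set.univ.pi fun _ => T,
          |lam ^ betaSum α s * gbinom (betaSum α s) n * (-u)^n| :=
          (by
            have hn := norm_integral_le_integral_norm
              (μ := (volume : Measure (Fin r → ℝ)).restrict (Set.univ.pi fun _ => T))
              (fun s : Fin r → ℝ => lam ^ betaSum α s * gbinom (betaSum α s) n * (-u)^n)
            simpa only [Real.norm_eq_abs] using hn)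
      _ ≤ ∫ s : Fin r → ℝ in Set.univ.pi fun _ => T,
          lam ^ betaSum α s * gbinom (-(betaSum α s)) n * (-u)^n := by
          apply setIntegral_mono_on ((hIntF r n).abs) (hIntG r n) (hQm r)
          intro s hs
          have hb0 := hβ0 r s hs
          have h2 : |gbinom (betaSum α s) n| ≤ (-1:ℝ)^n * gbinom (-(betaSum α s)) n :=
            abs_gbinom_le _ _ (le_of_eq (abs_of_nonneg hb0)) n
          have h4 : gbinom (-(betaSum α s)) n * (-u)^n
              = ((-1:ℝ)^n * gbinom (-(betaSum α s)) n) * u^n := by rw [neg_pow]; ring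
          rw [abs_mul, abs_mul, abs_pow, abs_neg, abs_of_nonneg hu0,
            abs_of_nonneg (hwpos r s).le, mul_assoc, mul_assoc, h4]
          apply mul_le_mul_of_nonneg_left ?_ (hwpos r s).le
          exact mul_le_mul_of_nonneg_right h2 (pow_nonneg hu0 n)
  -- summability of the dominating family on the product
  have hGprod : Summable (fun p : ℕ × ℕ => G p.1 p.2) := by
    apply (summable_prod_of_nonneg (fun p => hGnn p.1 p.2)).mpr
    refine ⟨fun r => (hGhs r).summable, ?_⟩
    apply Summable.congr (Real.summable_pow_div_factorial (Jc ((1-u)⁻¹)))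
    intro r
    exact ((hGhs r).tsum_eq).symm
  have hFprod : Summable (fun p : ℕ × ℕ => F p.1 p.2) := by
    apply Summable.of_norm_bounded hGprod
    intro p
    rw [Real.norm_eq_abs]
    exact hFG p.1 p.2
  have hrowSummable : ∀ r : ℕ, Summable (F r) := fun r => (hFhs r).summable
  have hcolSummable : ∀ n : ℕ, Summable (fun r => F r n) :=
    fun n => hFprod.prod_symm.prod_factor n
  have hexp1 : HasSum (fun r : ℕ => (-Jc (1-u))^r / r.factorial) (Real.exp (-Jc (1-u))) := by
    rw [Real.exp_eq_exp_ℝ]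
    exact NormedSpace.expSeries_div_hasSum_exp (-Jc (1-u))
  have hS1 : ∑' p : ℕ × ℕ, F p.1 p.2 = Real.exp (-Jc (1-u)) := by
    rw [Summable.tsum_prod' hFprod hrowSummable, tsum_congr (fun r => (hFhs r).tsum_eq)]
    exact hexp1.tsum_eq
  have hswap : ∑' p : ℕ × ℕ, F p.1 p.2 = ∑' n, ∑' r, F r n := by
    rw [Summable.tsum_prod' hFprod hrowSummable]
    have huc : Summable (Function.uncurry F) := hFprod
    exact (Summable.tsum_comm' huc hrowSummable hcolSummable).symm
  have hHsummable : Summable (fun n => ∑' r, F r n) :=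
    ((hFprod.prod_symm).hasSum.prod_fiberwise (fun n => (hcolSummable n).hasSum)).summable
  -- the n = 0 row
  have hexp2 : HasSum (fun r : ℕ => (-Jc 1)^r / r.factorial) (Real.exp (-Jc 1)) := by
    rw [Real.exp_eq_exp_ℝ]
    exact NormedSpace.expSeries_div_hasSum_exp (-Jc 1)
  have hF0 : ∀ r : ℕ, F r 0 = (-Jc 1)^r / r.factorial := by
    intro r
    show ((-1:ℝ)^r / (r.factorial : ℝ)) *
      (∫ s : Fin r → ℝ in Set.univ.pi fun _ => T,
        lam ^ betaSum α s * gbinom (betaSum α s) 0 * (-u)^0) = _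
    have h1 : (fun s : Fin r → ℝ => lam ^ betaSum α s * gbinom (betaSum α s) 0 * (-u)^0)
        = fun s : Fin r → ℝ => lam ^ betaSum α s * (1:ℝ) ^ betaSum α s := by
      funext s
      rw [gbinom_zero, Real.one_rpow]
      ring
    rw [h1, ← hpow 1 one_pos r, neg_pow]
    ring
  have hrow0 : ∑' r, F r 0 = Real.exp (-Jc 1) := by
    rw [tsum_congr hF0]
    exact hexp2.tsum_eq
  -- the r = 0 entries vanish for n ≥ 1
  have hF0n : ∀ n : ℕ, F 0 (n+1) = 0 := by
    intro n
    show ((-1:ℝ)^0 / ((Nat.factorial 0 : ℕ) : ℝ)) *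
      (∫ s : Fin 0 → ℝ in Set.univ.pi fun _ => T,
        lam ^ betaSum α s * gbinom (betaSum α s) (n+1) * (-u)^(n+1)) = 0
    have h1 : (fun s : Fin 0 → ℝ =>
        lam ^ betaSum α s * gbinom (betaSum α s) (n+1) * (-u)^(n+1))
        = fun _ : Fin 0 → ℝ => (0:ℝ) := by
      funext s
      have hb : betaSum α s = 0 := by simp [betaSum]
      rw [hb, gbinom_zero_left]
      ring
    rw [h1]
    simp
  -- shifted rows
  have hFshift : ∀ n r : ℕ, F (r+1) (n+1)
      = u^(n+1) * (((-1:ℝ)^((n+1)+(r+1)) / ((r+1).factorial : ℝ)) *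
          ∫ s : Fin (r+1) → ℝ in Set.univ.pi fun _ => T,
            lam ^ betaSum α s * gbinom (betaSum α s) (n+1)) := by
    intro n r
    show ((-1:ℝ)^(r+1) / ((r+1).factorial : ℝ)) *
      (∫ s : Fin (r+1) → ℝ in Set.univ.pi fun _ => T,
        lam ^ betaSum α s * gbinom (betaSum α s) (n+1) * (-u)^(n+1)) = _
    rw [integral_mul_const, neg_pow, pow_add ((-1:ℝ)) (n+1) (r+1)]
    ring
  have hcol : ∀ n : ℕ, ∑' r, F r (n+1)
      = u^(n+1) * ∑' r : ℕ, ((-1:ℝ)^((n+1)+(r+1)) / ((r+1).factorial : ℝ)) *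
          ∫ s : Fin (r+1) → ℝ in Set.univ.pi fun _ => T,
            lam ^ betaSum α s * gbinom (betaSum α s) (n+1) := by
    intro n
    rw [Summable.tsum_eq_zero_add (hcolSummable (n+1)), hF0n n, zero_add]
    rw [tsum_congr (fun r => hFshift n r)]
    exact tsum_mul_left
  -- main identity
  have hmain : Real.exp (-Jc (1-u)) = Real.exp (-Jc 1)
      + ∑' n : ℕ, u^(n+1) * ∑' r : ℕ, ((-1:ℝ)^((n+1)+(r+1)) / ((r+1).factorial : ℝ)) *
          ∫ s : Fin (r+1) → ℝ in Set.univ.pi fun _ => T,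
            lam ^ betaSum α s * gbinom (betaSum α s) (n+1) := by
    rw [← hS1, hswap, Summable.tsum_eq_zero_add hHsummable, hrow0]
    congr 1
    exact tsum_congr hcol
  -- translate the interval integrals
  rw [hiv (fun s => lam ^ α s * (1 - u) ^ α s), hiv (fun s => lam ^ α s)]
  have hJ1 : Jc 1 = ∫ s in T, lam ^ α s := by
    apply integral_congr_ae
    apply ae_of_all
    intro s
    show lam ^ α s * (1:ℝ) ^ α s = lam ^ α s
    rw [Real.one_rpow, mul_one]
  rw [← hJ1]
  exact hmain
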